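/- Let μ be a probability measure on ℝ^d with support D, and let V be an N-dimensional subspace of L²_μ(D) with orthonormal basis v_1, …, v_N such that K(x,x) := Σ_{i=1}^N |v_i(x)|² is finite and positive on D. Define the Christoffel function λ(x) = N / K(x,x), the induced probability measure dμ_V(x) = λ(x)^{-1} dμ(x) = (1/N) K(x,x) dμ(x), and the weighted space W = { √λ · v : v ∈ V }. Then the functions w_i = √λ · v_i form an L²_{μ_V}-orthonormal basis for W, sup_{x∈D} Σ_{i=1}^N |w_i(x)|² = N, and for every w ∈ W one has ‖w‖²_{2,μ_V} ≤ ‖w‖²_∞ ≤ N · ‖w‖²_{2,μ_V}. -/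

import Mathlib

open MeasureTheory
open scoped BigOperators ENNReal

section Helpers

variable {α : Type*}

lemma my_biSup_le {D : Set α} {f : α → ℝ} {B : ℝ} (hB : 0 ≤ B)
    (h : ∀ x ∈ D, f x ≤ B) : (⨆ x ∈ D, f x) ≤ B :=
  Real.iSup_le (fun x => Real.iSup_le (fun hx => h x hx) hB) hB

lemma my_le_biSup {D : Set α} {f : α → ℝ} {B : ℝ} (hB : 0 ≤ B)
    (h : ∀ x ∈ D, f x ≤ B) {x : α} (hx : x ∈ D) : f x ≤ ⨆ y ∈ D, f y := by
  have hbdd : BddAbove (Set.range fun y => ⨆ _ : y ∈ D, f y) := by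
    refine ⟨B, ?_⟩
    rintro _ ⟨y, rfl⟩
    exact Real.iSup_le (fun hy => h y hy) hB
  have hx' : (⨆ _ : x ∈ D, f x) = f x := ciSup_pos hx
  calc f x = ⨆ _ : x ∈ D, f x := hx'.symm
    _ ≤ ⨆ y ∈ D, f y := le_ciSup hbdd x

lemma my_biSup_const {D : Set α} (hD : D.Nonempty) {f : α → ℝ} {a : ℝ} (ha : 0 ≤ a)
    (hf : ∀ x ∈ D, f x = a) : (⨆ x ∈ D, f x) = a := by
  obtain ⟨x0, hx0⟩ := hD
  refine le_antisymm (my_biSup_le ha fun x hx => (hf x hx).le) ?_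
  calc a = f x0 := (hf x0 hx0).symm
    _ ≤ ⨆ x ∈ D, f x := my_le_biSup ha (fun x hx => (hf x hx).le) hx0

end Helpers

/-- With `μ` a probability measure supported on `D`, `V` an
`N`-dimensional subspace of `L²_μ(D)` with orthonormal basis `v i`, kernel diagonal
`K(x,x) = ∑ i, (v i x)²` finite and positive on `D`, Christoffel function
`λ(x) = N / K(x,x)`, induced measure `dμ_V = λ⁻¹ dμ = (K(x,x)/N) dμ`, and weighted
space `W = √λ · V`: the functions `w i = √λ · v i` form an `L²_{μ_V}`-orthonormal
basis of `W`, `sup_{x∈D} ∑ i, (w i x)² = N`, and every `w ∈ W` satisfies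
`‖w‖²_{2,μ_V} ≤ ‖w‖²_∞ ≤ N ‖w‖²_{2,μ_V}`. -/
theorem stmt2 {d N : ℕ} (μ : Measure (EuclideanSpace ℝ (Fin d)))
    [IsProbabilityMeasure μ]
    (D : Set (EuclideanSpace ℝ (Fin d))) (hDclosed : IsClosed D) (hDsupp : μ Dᶜ = 0)
    (v : Fin N → EuclideanSpace ℝ (Fin d) → ℝ)
    (hmeas : ∀ i, Measurable (v i))
    (hL2 : ∀ i, MemLp (v i) 2 μ)
    (horth : ∀ i j, ∫ x, v i x * v j x ∂μ = if i = j then 1 else 0)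
    (Kx lam : EuclideanSpace ℝ (Fin d) → ℝ)
    (hKx : Kx = fun x => ∑ i, (v i x) ^ 2)
    (hKpos : ∀ x ∈ D, 0 < Kx x)
    (hlam : lam = fun x => (N : ℝ) / Kx x)
    (μV : Measure (EuclideanSpace ℝ (Fin d)))
    (hμV : μV = μ.withDensity (fun x => ENNReal.ofReal (Kx x / N)))
    (w : Fin N → EuclideanSpace ℝ (Fin d) → ℝ)
    (hw : ∀ i, w i = fun x => Real.sqrt (lam x) * v i x) :
    (∀ i j, ∫ x, w i x * w j x ∂μV = if i = j then 1 else 0) ∧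
    (⨆ x ∈ D, ∑ i, (w i x) ^ 2) = (N : ℝ) ∧
    (∀ c : Fin N → ℝ,
      (∫ x, (∑ i, c i * w i x) ^ 2 ∂μV) ≤ (⨆ x ∈ D, |∑ i, c i * w i x|) ^ 2 ∧
      (⨆ x ∈ D, |∑ i, c i * w i x|) ^ 2 ≤ (N : ℝ) * ∫ x, (∑ i, c i * w i x) ^ 2 ∂μV) := by
  -- Basic facts
  have hDne : D.Nonempty := by
    rcases Set.eq_empty_or_nonempty D with h | h
    · exfalso
      have h1 : μ Set.univ = 0 := by
        have : Dᶜ = Set.univ := by rw [h, Set.compl_empty]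
        rw [← this]; exact hDsupp
      simp [measure_univ] at h1
    · exact h
  have hN : 0 < N := by
    by_contra h
    push_neg at h
    interval_cases N
    obtain ⟨x0, hx0⟩ := hDne
    have := hKpos x0 hx0
    rw [hKx] at this
    simp at this
  have hNR : (0:ℝ) < (N:ℝ) := by exact_mod_cast hN
  have hKnn : ∀ x, 0 ≤ Kx x := by
    intro x; rw [hKx]; exact Finset.sum_nonneg fun i _ => sq_nonneg _
  have hlamnn : ∀ x, 0 ≤ lam x := by
    intro x; rw [hlam]; exact div_nonneg hNR.le (hKnn x)
  have hKmeas : Measurable Kx := by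
    rw [hKx]; exact Finset.measurable_sum _ fun i _ => (hmeas i).pow_const 2
  have hae : ∀ᵐ x ∂μ, x ∈ D := by
    rw [MeasureTheory.ae_iff]
    exact hDsupp
  -- integral transfer
  have hint : ∀ g : EuclideanSpace ℝ (Fin d) → ℝ,
      (∫ x, g x ∂μV) = ∫ x, (Kx x / N) * g x ∂μ := by
    intro g
    rw [hμV]
    have hd : (fun x => ENNReal.ofReal (Kx x / N))
        = fun x => ((fun y => (Kx y / N).toNNReal) x : ℝ≥0∞) := rfl
    rw [hd, integral_withDensity_eq_integral_smul
      ((hKmeas.div_const _).real_toNNReal) g]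
    congr 1
    funext x
    rw [NNReal.smul_def, Real.coe_toNNReal _ (div_nonneg (hKnn x) hNR.le)]
    rfl
  -- integrability of products
  have hvv : ∀ i j : Fin N, Integrable (fun x => v i x * v j x) μ := by
    intro i j
    have hig : Integrable (fun x => v i x ^ 2 + v j x ^ 2) μ :=
      (hL2 i).integrable_sq.add (hL2 j).integrable_sq
    refine hig.mono' ((hmeas i).mul (hmeas j)).aestronglyMeasurable ?_
    filter_upwards with x
    have h1 : |v i x * v j x| ≤ v i x ^ 2 + v j x ^ 2 := by
      rw [abs_mul]
      nlinarith [sq_nonneg (|v i x| - |v j x|), abs_nonneg (v i x), abs_nonneg (v j x),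
        sq_abs (v i x), sq_abs (v j x)]
    calc ‖v i x * v j x‖ = |v i x * v j x| := rfl
      _ ≤ v i x ^ 2 + v j x ^ 2 := h1
  -- pointwise on D: Kx/N * lam = 1
  have hcancel : ∀ x ∈ D, Kx x / N * lam x = 1 := by
    intro x hx
    have hK := hKpos x hx
    rw [hlam]
    field_simp
  -- pointwise: w i x * w j x = lam x * (v i x * v j x)
  have hwprod : ∀ (i j : Fin N) (x), w i x * w j x = lam x * (v i x * v j x) := by
    intro i j x
    rw [hw i, hw j]
    have hs : Real.sqrt (lam x) * Real.sqrt (lam x) = lam x := Real.mul_self_sqrt (hlamnn x)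
    dsimp only
    calc Real.sqrt (lam x) * v i x * (Real.sqrt (lam x) * v j x)
        = (Real.sqrt (lam x) * Real.sqrt (lam x)) * (v i x * v j x) := by ring
      _ = lam x * (v i x * v j x) := by rw [hs]
  -- Part 1
  have part1 : ∀ i j, ∫ x, w i x * w j x ∂μV = if i = j then 1 else 0 := by
    intro i j
    rw [hint (fun x => w i x * w j x)]
    have hcong : (fun x => Kx x / N * (w i x * w j x)) =ᵐ[μ] fun x => v i x * v j x := by
      filter_upwards [hae] with x hx
      rw [hwprod i j x, ← mul_assoc, hcancel x hx, one_mul]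
    rw [integral_congr_ae hcong, horth i j]
  -- claim 2 pointwise
  have hW2 : ∀ x ∈ D, (∑ i, (w i x) ^ 2) = (N : ℝ) := by
    intro x hx
    have hK := hKpos x hx
    have h1 : ∀ i : Fin N, (w i x) ^ 2 = lam x * (v i x) ^ 2 := by
      intro i
      rw [sq, hwprod i i x, sq]
    calc (∑ i, (w i x) ^ 2) = ∑ i, lam x * (v i x) ^ 2 := by
          exact Finset.sum_congr rfl fun i _ => h1 i
      _ = lam x * ∑ i, (v i x) ^ 2 := by rw [Finset.mul_sum]
      _ = lam x * Kx x := by rw [hKx]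
      _ = (N : ℝ) := by rw [hlam]; field_simp
  refine ⟨part1, my_biSup_const hDne hNR.le hW2, ?_⟩
  -- Part 3
  intro c
  set Sw : EuclideanSpace ℝ (Fin d) → ℝ := fun x => ∑ i, c i * w i x with hSw
  -- value of the integral
  have hSint : (∫ x, (Sw x) ^ 2 ∂μV) = ∑ i, (c i) ^ 2 := by
    rw [hint (fun x => (Sw x) ^ 2)]
    have hcong : (fun x => Kx x / N * (Sw x) ^ 2) =ᵐ[μ]
        fun x => (∑ i, c i * v i x) ^ 2 := by
      filter_upwards [hae] with x hx
      have h1 : Sw x = Real.sqrt (lam x) * ∑ i, c i * v i x := by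
        rw [hSw, Finset.mul_sum]
        refine Finset.sum_congr rfl fun i _ => ?_
        rw [hw i]; dsimp only; ring
      have h2 : (Sw x) ^ 2 = lam x * (∑ i, c i * v i x) ^ 2 := by
        rw [h1, mul_pow, Real.sq_sqrt (hlamnn x)]
      rw [h2, ← mul_assoc, hcancel x hx, one_mul]
    rw [integral_congr_ae hcong]
    have hexp : ∀ x, (∑ i, c i * v i x) ^ 2
        = ∑ i, ∑ j, (c i * c j) * (v i x * v j x) := by
      intro x
      rw [sq, Finset.sum_mul_sum]
      exact Finset.sum_congr rfl fun i _ => Finset.sum_congr rfl fun j _ => by ring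
    simp_rw [hexp]
    rw [integral_finset_sum _ fun i _ => integrable_finset_sum _
      fun j _ => (hvv i j).const_mul _]
    have : ∀ i : Fin N, (∫ x, ∑ j, (c i * c j) * (v i x * v j x) ∂μ) = (c i)^2 := by
      intro i
      rw [integral_finset_sum _ fun j _ => (hvv i j).const_mul _]
      have : ∀ j : Fin N, (∫ x, (c i * c j) * (v i x * v j x) ∂μ)
          = (c i * c j) * (if i = j then 1 else 0) := by
        intro j
        rw [integral_const_mul, horth i j]
      simp_rw [this]
      simp [Finset.sum_ite_eq, sq]
    simp_rw [this]
  -- upper bound on D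
  have hcs : ∀ x ∈ D, |Sw x| ≤ Real.sqrt ((∑ i, (c i)^2) * N) := by
    intro x hx
    have h1 : (Sw x) ^ 2 ≤ (∑ i, (c i)^2) * (∑ i, (w i x)^2) :=
      Finset.sum_mul_sq_le_sq_mul_sq Finset.univ c (fun i => w i x)
    rw [hW2 x hx] at h1
    have h2 : |Sw x|^2 ≤ (∑ i, (c i)^2) * N := by rwa [sq_abs]
    have hy : (0:ℝ) ≤ (∑ i, (c i)^2) * N := by positivity
    exact (Real.le_sqrt (abs_nonneg _) hy).mpr h2
  have hBnn : (0:ℝ) ≤ Real.sqrt ((∑ i, (c i)^2) * N) := Real.sqrt_nonneg _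
  set M : ℝ := ⨆ x ∈ D, |Sw x| with hM
  have hMle : M ≤ Real.sqrt ((∑ i, (c i)^2) * N) := my_biSup_le hBnn hcs
  have hM0 : 0 ≤ M := by
    obtain ⟨x0, hx0⟩ := hDne
    exact le_trans (abs_nonneg _) (my_le_biSup hBnn hcs hx0)
  constructor
  · -- ∫ Sw² ∂μV ≤ M²
    have hKint : (∫ x, Kx x / N ∂μ) = 1 := by
      rw [hKx]
      have : (∫ x, (∑ i, (v i x)^2) / N ∂μ) = (∫ x, ∑ i, (v i x)^2 ∂μ) / N := by
        simp_rw [div_eq_mul_inv]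
        rw [integral_mul_const]
      dsimp only
      rw [this, integral_finset_sum _ fun i _ => (hL2 i).integrable_sq]
      have h2 : ∀ i : Fin N, (∫ x, (v i x)^2 ∂μ) = 1 := by
        intro i
        have := horth i i
        rw [if_pos rfl] at this
        rw [← this]
        exact integral_congr_ae (Filter.Eventually.of_forall fun x => sq (v i x))
      simp_rw [h2]
      simp [div_self hNR.ne']
    rw [hint (fun x => (Sw x) ^ 2)]
    have hmono : (∫ x, Kx x / N * (Sw x)^2 ∂μ) ≤ ∫ x, Kx x / N * M^2 ∂μ := by
      refine integral_mono_of_nonneg ?_ ?_ ?_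
      · filter_upwards with x
        exact mul_nonneg (div_nonneg (hKnn x) hNR.le) (sq_nonneg _)
      · refine Integrable.mul_const ?_ _
        refine Integrable.div_const ?_ _
        rw [hKx]
        exact integrable_finset_sum _ fun i _ => (hL2 i).integrable_sq
      · filter_upwards [hae] with x hx
        have h1 : |Sw x| ≤ M := my_le_biSup hBnn hcs hx
        have h2 : (Sw x)^2 ≤ M^2 := by
          rw [← sq_abs]
          exact pow_le_pow_left₀ (abs_nonneg _) h1 2
        exact mul_le_mul_of_nonneg_left h2 (div_nonneg (hKnn x) hNR.le)
    calc (∫ x, Kx x / N * (Sw x)^2 ∂μ) ≤ ∫ x, Kx x / N * M^2 ∂μ := hmono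
      _ = (∫ x, Kx x / N ∂μ) * M^2 := by rw [integral_mul_const]
      _ = M ^ 2 := by rw [hKint, one_mul]
  · -- M² ≤ N * ∫
    have h1 : M^2 ≤ (∑ i, (c i)^2) * N := by
      calc M^2 ≤ (Real.sqrt ((∑ i, (c i)^2) * N))^2 := pow_le_pow_left₀ hM0 hMle 2
        _ = (∑ i, (c i)^2) * N := Real.sq_sqrt (by positivity)
    rw [hSint]
    linarith [h1]
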